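/- For every n ≥ 1 and k ≥ 1, the family F = {{1,2,...,k-1, jk} : j = 1,...,n} of n ships of size k is pierced by the pattern X = kℤ, which has density exactly 1/k. Hence the infimum m_k^n of π over families of n k-ships equals 1/k. -/

import Mathlib

/-- A shooting pattern `X` hits a ship `S` if every translate of `S` intersects `X`. -/
def Hits (X S : Set ℤ) : Prop := ∀ n : ℤ, ∃ s ∈ S, n + s ∈ X

/-- Lower asymptotic density of a set of integers. -/
noncomputable def lowerDensity (X : Set ℤ) : ℝ :=
  Filter.liminf (fun N : ℕ =>
    ((X ∩ Set.Icc (-(N:ℤ)) (N:ℤ)).ncard : ℝ) / (2 * N + 1)) Filter.atTop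

/-- Optimal piercing density of a family of ships. -/
noncomputable def piercing (F : Set (Set ℤ)) : ℝ :=
  sInf (lowerDensity '' {X | ∀ S ∈ F, Hits X S})

open Filter Set

lemma ncard_Icc_int (a b : ℤ) : (Set.Icc a b).ncard = (b + 1 - a).toNat := by
  rw [← Finset.coe_Icc, Set.ncard_coe_finset, Int.card_Icc]

lemma densTerm_le_one (X : Set ℤ) (N : ℕ) :
    ((X ∩ Set.Icc (-(N:ℤ)) (N:ℤ)).ncard : ℝ) / (2 * N + 1) ≤ 1 := by
  have hD : (0:ℝ) < 2 * N + 1 := by positivity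
  rw [div_le_one hD]
  have h1 : (X ∩ Set.Icc (-(N:ℤ)) (N:ℤ)).ncard ≤ (Set.Icc (-(N:ℤ)) (N:ℤ)).ncard :=
    Set.ncard_le_ncard Set.inter_subset_right (Set.finite_Icc _ _)
  have h2 : (Set.Icc (-(N:ℤ)) (N:ℤ)).ncard = 2 * N + 1 := by
    rw [ncard_Icc_int]; omega
  calc ((X ∩ Set.Icc (-(N:ℤ)) (N:ℤ)).ncard : ℝ) ≤ ((2 * N + 1 : ℕ) : ℝ) := by
        exact_mod_cast h2 ▸ h1
    _ = 2 * (N:ℝ) + 1 := by push_cast; ring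

lemma densTerm_cobounded (X : Set ℤ) :
    Filter.IsCoboundedUnder (· ≥ ·) Filter.atTop (fun N : ℕ =>
      ((X ∩ Set.Icc (-(N:ℤ)) (N:ℤ)).ncard : ℝ) / (2 * N + 1)) :=
  Filter.IsBoundedUnder.isCoboundedUnder_ge
    (Filter.isBoundedUnder_of ⟨1, fun N => densTerm_le_one X N⟩)

lemma lowerDensity_nonneg (X : Set ℤ) : 0 ≤ lowerDensity X := by
  refine Filter.le_liminf_of_le (densTerm_cobounded X) ?_
  filter_upwards with N
  positivity

lemma denom_atTop (k : ℕ) (hk : 1 ≤ k) :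
    Filter.Tendsto (fun N : ℕ => (k:ℝ) * (2 * N + 1)) Filter.atTop Filter.atTop := by
  apply Filter.tendsto_atTop_mono (f := fun N : ℕ => (N:ℝ))
  · intro N
    have h1 : (1:ℝ) ≤ k := by exact_mod_cast hk
    have h2 : (0:ℝ) ≤ N := Nat.cast_nonneg N
    nlinarith
  · exact tendsto_natCast_atTop_atTop

lemma tendsto_aux (k : ℕ) (hk : 1 ≤ k) (c : ℝ) :
    Filter.Tendsto (fun N : ℕ => (1:ℝ)/k + c/((k:ℝ)*(2*N+1))) Filter.atTop (nhds ((1:ℝ)/k)) := by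
  have h := Filter.Tendsto.div_atTop (tendsto_const_nhds (x := c)) (denom_atTop k hk)
  simpa using (tendsto_const_nhds (x := (1:ℝ)/k)).add h

lemma comb (k : ℕ) (hk : 1 ≤ k) (N : ℕ) (c : ℝ) :
    (1:ℝ)/k + c/((k:ℝ)*(2*N+1)) = ((2*(N:ℝ)+1)+c)/((k:ℝ)*(2*N+1)) := by
  have hk0 : (k:ℝ) ≠ 0 := by positivity
  have hD : (2*(N:ℝ)+1) ≠ 0 := by positivity
  field_simp

lemma hits_density_ge (X S : Set ℤ) (hS : S.Finite) (k : ℕ) (hk : 1 ≤ k)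
    (hcard : S.ncard = k) (h : Hits X S) : (1:ℝ)/k ≤ lowerDensity X := by
  classical
  choose f hfS hfX using h
  set C : ℕ := hS.toFinset.sup (fun s => s.natAbs) with hCdef
  have hC : ∀ s ∈ S, s.natAbs ≤ C := fun s hs => Finset.le_sup (hS.mem_toFinset.2 hs)
  have key : ∀ N : ℕ, 2 * N + 1 ≤ (X ∩ Set.Icc (-((N:ℤ)+C)) ((N:ℤ)+C)).ncard * k := by
    intro N
    set A : Set ℤ := X ∩ Set.Icc (-((N:ℤ)+C)) ((N:ℤ)+C) with hA
    have hAfin : A.Finite := (Set.finite_Icc _ _).subset Set.inter_subset_right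
    set AF := hAfin.toFinset with hAF
    set Sf := hS.toFinset with hSf
    have hsub : Finset.Icc (-(N:ℤ)) (N:ℤ) ⊆ AF.biUnion (fun x => Sf.image (fun s => x - s)) := by
      intro m hm
      rw [Finset.mem_Icc] at hm
      have hfm := hfS m
      have habs := hC _ hfm
      have hmem : m + f m ∈ A := by
        refine ⟨hfX m, ?_⟩
        rw [Set.mem_Icc]
        constructor <;> omega
      rw [Finset.mem_biUnion]
      refine ⟨m + f m, hAfin.mem_toFinset.2 hmem, ?_⟩
      rw [Finset.mem_image]
      exact ⟨f m, hS.mem_toFinset.2 hfm, by ring⟩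
    have hcardle := Finset.card_le_card hsub
    have h1 : (Finset.Icc (-(N:ℤ)) (N:ℤ)).card = 2 * N + 1 := by
      rw [Int.card_Icc]; omega
    have h2 : (AF.biUnion (fun x => Sf.image (fun s => x - s))).card ≤ AF.card * k := by
      calc _ ≤ ∑ x ∈ AF, (Sf.image (fun s => x - s)).card := Finset.card_biUnion_le
        _ ≤ ∑ _x ∈ AF, k := by
            refine Finset.sum_le_sum fun x _ => ?_
            calc (Sf.image (fun s => x - s)).card ≤ Sf.card := Finset.card_image_le
              _ = k := by rw [← hcard, hSf, ← Set.ncard_coe_finset, Set.Finite.coe_toFinset]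
        _ = AF.card * k := by rw [Finset.sum_const, smul_eq_mul]
    have h3 : AF.card = A.ncard := by
      rw [hAF, ← Set.ncard_coe_finset, Set.Finite.coe_toFinset]
    rw [h3] at h2
    omega
  have hev : ∀ᶠ M : ℕ in atTop, (1:ℝ)/k + (-(2*(C:ℝ)))/((k:ℝ)*(2*M+1)) ≤
      ((X ∩ Set.Icc (-(M:ℤ)) (M:ℤ)).ncard : ℝ) / (2 * M + 1) := by
    filter_upwards [eventually_ge_atTop C] with M hM
    obtain ⟨N, rfl⟩ : ∃ N : ℕ, M = N + C := ⟨M - C, by omega⟩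
    have hkey := key N
    have hcoe : ((N + C : ℕ) : ℤ) = (N:ℤ) + C := by push_cast; ring
    rw [comb k hk (N+C) _, hcoe]
    rw [div_le_div_iff₀ (by positivity) (by positivity)]
    have hcast : (2*(N:ℝ)+1) ≤ ((X ∩ Set.Icc (-((N:ℤ)+C)) ((N:ℤ)+C)).ncard : ℝ) * k := by
      have : ((2*N+1 : ℕ) : ℝ) ≤ (((X ∩ Set.Icc (-((N:ℤ)+C)) ((N:ℤ)+C)).ncard * k : ℕ) : ℝ) := by
        exact_mod_cast hkey
      push_cast at this
      linarith [this]
    have hCc : ((N + C : ℕ) : ℝ) = (N:ℝ) + C := by push_cast; ring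
    rw [hCc]
    have hpos : (0:ℝ) ≤ 2*((N:ℝ)+C)+1 := by positivity
    nlinarith [mul_le_mul_of_nonneg_right hcast hpos]
  have hle := Filter.liminf_le_liminf hev ((tendsto_aux k hk _).isBoundedUnder_ge)
    (densTerm_cobounded X)
  rwa [(tendsto_aux k hk _).liminf_eq] at hle

lemma mult_count (k : ℕ) (hk : 1 ≤ k) (N : ℕ) :
    ({c : ℤ | (k:ℤ) ∣ c} ∩ Set.Icc (-(N:ℤ)) (N:ℤ)).ncard = 2 * (N / k) + 1 := by
  have hk0 : (0:ℤ) < k := by exact_mod_cast hk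
  have hdiv : ((N / k : ℕ) : ℤ) = (N:ℤ) / (k:ℤ) := Int.natCast_ediv N k
  have hset : {c : ℤ | (k:ℤ) ∣ c} ∩ Set.Icc (-(N:ℤ)) (N:ℤ)
      = (fun q : ℤ => q * k) '' Set.Icc (-((N / k : ℕ) : ℤ)) ((N / k : ℕ) : ℤ) := by
    ext c
    simp only [Set.mem_inter_iff, Set.mem_setOf_eq, Set.mem_Icc, Set.mem_image]
    constructor
    · rintro ⟨⟨q, rfl⟩, h1, h2⟩
      refine ⟨q, ⟨?_, ?_⟩, by ring⟩
      · rw [neg_le, hdiv, Int.le_ediv_iff_mul_le hk0]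
        nlinarith
      · rw [hdiv, Int.le_ediv_iff_mul_le hk0]
        nlinarith
    · rintro ⟨q, ⟨h1, h2⟩, rfl⟩
      rw [neg_le, hdiv, Int.le_ediv_iff_mul_le hk0] at h1
      rw [hdiv, Int.le_ediv_iff_mul_le hk0] at h2
      exact ⟨⟨q, mul_comm q (k:ℤ)⟩, by nlinarith, by nlinarith⟩
  rw [hset, Set.ncard_image_of_injective _ (fun a b hab => by
    have : (k:ℤ) ≠ 0 := by positivity
    exact mul_right_cancel₀ this hab), ncard_Icc_int]
  omega

lemma lowerDensity_mult (k : ℕ) (hk : 1 ≤ k) :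
    lowerDensity {c : ℤ | (k:ℤ) ∣ c} = 1 / k := by
  have hfun : (fun N : ℕ => (({c : ℤ | (k:ℤ) ∣ c} ∩ Set.Icc (-(N:ℤ)) (N:ℤ)).ncard : ℝ) / (2*N+1))
      = fun N : ℕ => ((2 * (N / k) + 1 : ℕ) : ℝ) / (2*(N:ℝ)+1) := by
    funext N; rw [mult_count k hk N]
  have hk' : (1:ℝ) ≤ k := by exact_mod_cast hk
  have htend : Tendsto (fun N : ℕ => ((2 * (N / k) + 1 : ℕ) : ℝ) / (2*(N:ℝ)+1)) atTop
      (nhds ((1:ℝ)/k)) := by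
    apply tendsto_of_tendsto_of_tendsto_of_le_of_le' (tendsto_aux k hk (-(k:ℝ)-1))
      (tendsto_aux k hk ((k:ℝ)-1))
    · filter_upwards with N
      rw [comb k hk N _, div_le_div_iff₀ (by positivity) (by positivity)]
      set q := N / k with hqdef
      have hq : k * q + N % k = N := Nat.div_add_mod N k
      have hr : N % k < k := Nat.mod_lt _ (by omega)
      have hq' : (k:ℝ) * q + ((N % k : ℕ) : ℝ) = N := by exact_mod_cast hq
      have hr' : ((N % k : ℕ) : ℝ) ≤ (k:ℝ) - 1 := by
        have h2 : N % k + 1 ≤ k := hr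
        have := (Nat.cast_le (α := ℝ)).2 h2
        push_cast at this; linarith
      have lin : 2*(N:ℝ) - k ≤ (2*q+1)*k := by nlinarith
      have hpos : (0:ℝ) ≤ 2*(N:ℝ)+1 := by positivity
      push_cast
      nlinarith [mul_le_mul_of_nonneg_right lin hpos]
    · filter_upwards with N
      rw [comb k hk N _, div_le_div_iff₀ (by positivity) (by positivity)]
      set q := N / k with hqdef
      have hq : k * q + N % k = N := Nat.div_add_mod N k
      have hq' : (k:ℝ) * q + ((N % k : ℕ) : ℝ) = N := by exact_mod_cast hq
      have hrn : (0:ℝ) ≤ ((N % k : ℕ) : ℝ) := Nat.cast_nonneg _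
      have lin : (2*(q:ℝ)+1)*k ≤ 2*(N:ℝ) + k := by nlinarith
      have hpos : (0:ℝ) ≤ 2*(N:ℝ)+1 := by positivity
      push_cast
      nlinarith [mul_le_mul_of_nonneg_right lin hpos]
  rw [lowerDensity, hfun]
  exact htend.liminf_eq

lemma hits_mult (k : ℕ) (hk : 1 ≤ k) (j : ℤ) (hj : 1 ≤ j) :
    Hits {c : ℤ | (k : ℤ) ∣ c} {m : ℤ | (1 ≤ m ∧ m ≤ (k : ℤ) - 1) ∨ m = j * k} := by
  intro p
  have hk0 : (0:ℤ) < k := by exact_mod_cast hk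
  by_cases h : (k:ℤ) ∣ p
  · exact ⟨j * k, Or.inr rfl, h.add ⟨j, mul_comm j (k:ℤ)⟩⟩
  · have hmod0 : p % (k:ℤ) ≠ 0 := fun hc => h (Int.dvd_of_emod_eq_zero hc)
    have hmodnn : 0 ≤ p % (k:ℤ) := Int.emod_nonneg p (by positivity)
    have hmodlt : p % (k:ℤ) < k := Int.emod_lt_of_pos p hk0
    refine ⟨(k:ℤ) - p % k, Or.inl ⟨by omega, by omega⟩, ?_⟩
    have h2 : (k:ℤ) * (p / k) + p % k = p := Int.mul_ediv_add_emod p k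
    exact ⟨p / k + 1, by linear_combination -h2⟩

lemma piercing_ge (n k : ℕ) (hn : 1 ≤ n) (hk : 1 ≤ k) (T : Fin n → Set ℤ)
    (hT : ∀ i, (T i).Finite ∧ (T i).ncard = k) :
    (1:ℝ)/k ≤ piercing {S | ∃ i, S = T i} := by
  have hne : ∀ i, (T i).Nonempty := fun i => by
    rw [← Set.ncard_pos (hT i).1, (hT i).2]; omega
  apply le_csInf
  · refine ⟨lowerDensity Set.univ, Set.mem_image_of_mem _ ?_⟩
    rintro S ⟨i, rfl⟩ p
    obtain ⟨s, hs⟩ := hne i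
    exact ⟨s, hs, trivial⟩
  · rintro b ⟨X, hX, rfl⟩
    exact hits_density_ge X (T ⟨0, hn⟩) (hT _).1 k hk (hT _).2 (hX _ ⟨⟨0, hn⟩, rfl⟩)

theorem stmt9 (n k : ℕ) (hn : 1 ≤ n) (hk : 1 ≤ k) :
    (∀ j : ℤ, 1 ≤ j → j ≤ (n : ℤ) →
      Hits {c : ℤ | (k : ℤ) ∣ c} {m : ℤ | (1 ≤ m ∧ m ≤ (k : ℤ) - 1) ∨ m = j * k}) ∧
    lowerDensity {c : ℤ | (k : ℤ) ∣ c} = 1 / k ∧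
    IsGLB {x : ℝ | ∃ T : Fin n → Set ℤ, (∀ i, (T i).Finite ∧ (T i).ncard = k) ∧
      x = piercing {S | ∃ i, S = T i}} (1 / k) := by
  refine ⟨fun j hj _ => hits_mult k hk j hj, lowerDensity_mult k hk, ?_⟩
  apply IsLeast.isGLB
  constructor
  · -- membership: explicit family achieves 1/k
    set T : Fin n → Set ℤ :=
      fun i => {m : ℤ | (1 ≤ m ∧ m ≤ (k : ℤ) - 1) ∨ m = (((i:ℕ):ℤ) + 1) * k} with hTdef
    have hTeq : ∀ i : Fin n, T i = Set.Icc 1 ((k:ℤ)-1) ∪ {(((i:ℕ):ℤ) + 1) * k} := by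
      intro i
      ext m
      simp only [hTdef, Set.mem_setOf_eq, Set.mem_union, Set.mem_Icc, Set.mem_singleton_iff]
    have hprop : ∀ i : Fin n, (T i).Finite ∧ (T i).ncard = k := by
      intro i
      rw [hTeq i]
      have hnotin : (((i:ℕ):ℤ) + 1) * k ∉ Set.Icc 1 ((k:ℤ)-1) := by
        rw [Set.mem_Icc]
        push_neg
        intro _
        have hi : (0:ℤ) ≤ ((i:ℕ):ℤ) := Int.natCast_nonneg _
        have hkz : (1:ℤ) ≤ k := by exact_mod_cast hk
        nlinarith
      constructor
      · exact (Set.finite_Icc _ _).union (Set.finite_singleton _)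
      · rw [Set.ncard_union_eq (Set.disjoint_singleton_right.2 hnotin)
          (Set.finite_Icc _ _) (Set.finite_singleton _), ncard_Icc_int,
          Set.ncard_singleton]
        have : (1:ℤ) ≤ k := by exact_mod_cast hk
        omega
    refine ⟨T, hprop, ?_⟩
    have hle : piercing {S | ∃ i, S = T i} ≤ 1/k := by
      have hmem : lowerDensity {c : ℤ | (k:ℤ) ∣ c} ∈
          lowerDensity '' {X | ∀ S ∈ {S | ∃ i, S = T i}, Hits X S} := by
        refine Set.mem_image_of_mem _ ?_
        rintro S ⟨i, rfl⟩
        exact hits_mult k hk (((i:ℕ):ℤ) + 1) (by have := Int.natCast_nonneg (i:ℕ); omega)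
      have hbdd : BddBelow (lowerDensity '' {X | ∀ S ∈ {S | ∃ i, S = T i}, Hits X S}) := by
        refine ⟨0, ?_⟩
        rintro b ⟨X, _, rfl⟩
        exact lowerDensity_nonneg X
      have := csInf_le hbdd hmem
      rwa [lowerDensity_mult k hk] at this
    have hge := piercing_ge n k hn hk T hprop
    have : piercing {S | ∃ i, S = T i} = 1/k := le_antisymm hle (by simpa using hge)
    exact this.symm
  · rintro x ⟨T, hT, rfl⟩
    simpa using piercing_ge n k hn hk T hT
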